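/- (One-step identification of the CPCEs.) Under Assumptions 1–4, for any measurable preliminary function τ̌^u(·) and each u ∈ {00,10,11}, the CPCE satisfies the one-step identity: for all x, τ^u(x) = E[ τ̌^u(X) + (φ_{1,u}(W) − φ_{0,u}(W) − τ̌^u(X)·g^u(W)) / e^u(X) | X=x ]. -/

import Mathlib

open MeasureTheory Filter
open scoped Classical

set_option maxHeartbeats 2000000

noncomputable section

/-- Conditional mean of `f` given the event `A`: `E[f | A] = (∫_A f dP) / P(A)`. -/
def condMeanOn {Ω : Type*} [MeasurableSpace Ω] (P : Measure Ω) (A : Set Ω) (f : Ω → ℝ) : ℝ :=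
  (∫ ω in A, f ω ∂P) / (P A).toReal

/-- Conditional probability of the event `A` given the event `B`: `P(A | B)`. -/
def condProbOn {Ω : Type*} [MeasurableSpace Ω] (P : Measure Ω) (A B : Set Ω) : ℝ :=
  (P (A ∩ B)).toReal / (P B).toReal

/-- Observed-cell outcome regression `μ_{zs}(x) = E(Y | Z = z, S = s, X = x)`. -/
def muZS {Ω 𝓧 : Type*} [MeasurableSpace Ω] (P : Measure Ω) (X : Ω → 𝓧) (Z S Y : Ω → ℝ)
    (z s : ℝ) (x : 𝓧) : ℝ :=
  condMeanOn P {ω | Z ω = z ∧ S ω = s ∧ X ω = x} Y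

/-- Propensity score `π(x) = P(Z = 1 | X = x)`. -/
def piX {Ω 𝓧 : Type*} [MeasurableSpace Ω] (P : Measure Ω) (X : Ω → 𝓧) (Z : Ω → ℝ)
    (x : 𝓧) : ℝ :=
  condProbOn P {ω | Z ω = 1} {ω | X ω = x}

/-- Principal score `p_z(x) = P(S = 1 | Z = z, X = x)`. -/
def pZs {Ω 𝓧 : Type*} [MeasurableSpace Ω] (P : Measure Ω) (X : Ω → 𝓧) (Z S : Ω → ℝ)
    (z : ℝ) (x : 𝓧) : ℝ :=
  condProbOn P {ω | S ω = 1} {ω | Z ω = z ∧ X ω = x}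

/-- Conditional principal causal effect
`τ^{(a,b)}(x) = E(Y(1) - Y(0) | S(1) = a, S(0) = b, X = x)`. -/
def tauPO {Ω 𝓧 : Type*} [MeasurableSpace Ω] (P : Measure Ω) (X : Ω → 𝓧)
    (S1 S0 Y1 Y0 : Ω → ℝ) (a b : ℝ) (x : 𝓧) : ℝ :=
  condMeanOn P {ω | S1 ω = a ∧ S0 ω = b ∧ X ω = x} (fun ω => Y1 ω - Y0 ω)

/-- Augmented score `ψ_{a,f}(W)` built from the true nuisance functions:
`ψ_{a,f}(W) = 1(Z = a)/P(Z = a | X) · (f(W) - E[f | X, Z = a]) + E[f | X, Z = a]`. -/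
def psiA {Ω 𝓧 : Type*} [MeasurableSpace Ω] (P : Measure Ω) (X : Ω → 𝓧) (Z : Ω → ℝ)
    (a : ℝ) (f : Ω → ℝ) : Ω → ℝ :=
  fun ω =>
    (if Z ω = a then (1 : ℝ) else 0) / condProbOn P {ω' | Z ω' = a} {ω' | X ω' = X ω}
        * (f ω - condMeanOn P {ω' | Z ω' = a ∧ X ω' = X ω} f)
      + condMeanOn P {ω' | Z ω' = a ∧ X ω' = X ω} f

/-- EIF component `φ_{1,10}`. -/
def phiA1_10 {Ω 𝓧 : Type*} [MeasurableSpace Ω] (P : Measure Ω) (X : Ω → 𝓧)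
    (Z S Y : Ω → ℝ) : Ω → ℝ :=
  fun ω =>
    ((pZs P X Z S 1 (X ω) - pZs P X Z S 0 (X ω)) / pZs P X Z S 1 (X ω))
        * psiA P X Z 1 (fun ω' => Y ω' * S ω') ω
      - muZS P X Z S Y 1 1 (X ω)
          * (psiA P X Z 0 S ω
              - (pZs P X Z S 0 (X ω) / pZs P X Z S 1 (X ω)) * psiA P X Z 1 S ω)

/-- EIF component `φ_{0,10}`. -/
def phiA0_10 {Ω 𝓧 : Type*} [MeasurableSpace Ω] (P : Measure Ω) (X : Ω → 𝓧)
    (Z S Y : Ω → ℝ) : Ω → ℝ :=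
  fun ω =>
    ((pZs P X Z S 1 (X ω) - pZs P X Z S 0 (X ω)) / (1 - pZs P X Z S 0 (X ω)))
        * psiA P X Z 0 (fun ω' => Y ω' * (1 - S ω')) ω
      - muZS P X Z S Y 0 0 (X ω)
          * (psiA P X Z 1 (fun ω' => 1 - S ω') ω
              - ((1 - pZs P X Z S 1 (X ω)) / (1 - pZs P X Z S 0 (X ω)))
                  * psiA P X Z 0 (fun ω' => 1 - S ω') ω)

/-- EIF component `φ_{1,11}`. -/
def phiA1_11 {Ω 𝓧 : Type*} [MeasurableSpace Ω] (P : Measure Ω) (X : Ω → 𝓧)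
    (Z S Y : Ω → ℝ) : Ω → ℝ :=
  fun ω =>
    (pZs P X Z S 0 (X ω) / pZs P X Z S 1 (X ω))
        * psiA P X Z 1 (fun ω' => Y ω' * S ω') ω
      + muZS P X Z S Y 1 1 (X ω)
          * (psiA P X Z 0 S ω
              - (pZs P X Z S 0 (X ω) / pZs P X Z S 1 (X ω)) * psiA P X Z 1 S ω)

/-- EIF component `φ_{0,11}`. -/
def phiA0_11 {Ω 𝓧 : Type*} [MeasurableSpace Ω] (P : Measure Ω) (X : Ω → 𝓧)
    (Z S Y : Ω → ℝ) : Ω → ℝ :=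
  psiA P X Z 0 (fun ω' => Y ω' * S ω')

/-- EIF component `φ_{1,00}`. -/
def phiA1_00 {Ω 𝓧 : Type*} [MeasurableSpace Ω] (P : Measure Ω) (X : Ω → 𝓧)
    (Z S Y : Ω → ℝ) : Ω → ℝ :=
  psiA P X Z 1 (fun ω' => Y ω' * (1 - S ω'))

/-- EIF component `φ_{0,00}`. -/
def phiA0_00 {Ω 𝓧 : Type*} [MeasurableSpace Ω] (P : Measure Ω) (X : Ω → 𝓧)
    (Z S Y : Ω → ℝ) : Ω → ℝ :=
  fun ω =>
    ((1 - pZs P X Z S 1 (X ω)) / (1 - pZs P X Z S 0 (X ω)))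
        * psiA P X Z 0 (fun ω' => Y ω' * (1 - S ω')) ω
      + muZS P X Z S Y 0 0 (X ω)
          * (psiA P X Z 1 (fun ω' => 1 - S ω') ω
              - ((1 - pZs P X Z S 1 (X ω)) / (1 - pZs P X Z S 0 (X ω)))
                  * psiA P X Z 0 (fun ω' => 1 - S ω') ω)

/-- Denominator score `g^{00} = ψ_{1,1-S}`. -/
def gA00 {Ω 𝓧 : Type*} [MeasurableSpace Ω] (P : Measure Ω) (X : Ω → 𝓧)
    (Z S : Ω → ℝ) : Ω → ℝ :=
  psiA P X Z 1 (fun ω' => 1 - S ω')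

/-- Denominator score `g^{10} = ψ_{1,S} - ψ_{0,S}`. -/
def gA10 {Ω 𝓧 : Type*} [MeasurableSpace Ω] (P : Measure Ω) (X : Ω → 𝓧)
    (Z S : Ω → ℝ) : Ω → ℝ :=
  fun ω => psiA P X Z 1 S ω - psiA P X Z 0 S ω

/-- Denominator score `g^{11} = ψ_{0,S}`. -/
def gA11 {Ω 𝓧 : Type*} [MeasurableSpace Ω] (P : Measure Ω) (X : Ω → 𝓧)
    (Z S : Ω → ℝ) : Ω → ℝ :=
  psiA P X Z 0 S



/-! ### Auxiliary lemmas -/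

lemma condMeanOn_sub' {Ω : Type*} [MeasurableSpace Ω] {P : Measure Ω} {A : Set Ω} {f g : Ω → ℝ}
    (hf : IntegrableOn f A P) (hg : IntegrableOn g A P) :
    condMeanOn P A (fun ω => f ω - g ω) = condMeanOn P A f - condMeanOn P A g := by
  unfold condMeanOn
  rw [integral_sub hf hg, sub_div]

lemma integral_eq_condMeanOn_mul {Ω : Type*} [MeasurableSpace Ω] {P : Measure Ω} {A : Set Ω}
    (f : Ω → ℝ) (hA : (P A).toReal ≠ 0) :
    ∫ ω in A, f ω ∂P = condMeanOn P A f * (P A).toReal := by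
  unfold condMeanOn; field_simp

lemma ind_mul_eq_indicator {Ω : Type*} (Z : Ω → ℝ) (a : ℝ) (g : Ω → ℝ) :
    (fun ω => (if Z ω = a then (1:ℝ) else 0) * g ω) = Set.indicator {ω | Z ω = a} g := by
  funext ω
  by_cases h : Z ω = a <;> simp [Set.indicator_apply, h]

lemma ind_measurable {Ω : Type*} [MeasurableSpace Ω] {Z : Ω → ℝ} (hZ : Measurable Z) (a : ℝ) :
    Measurable (fun ω => (if Z ω = a then (1:ℝ) else 0)) :=
  Measurable.ite (hZ (measurableSet_singleton a)) measurable_const measurable_const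

lemma ind_mul_integrable {Ω : Type*} [MeasurableSpace Ω] {P : Measure Ω}
    {Z : Ω → ℝ} (hZ : Measurable Z) (a : ℝ) {g : Ω → ℝ} (hg : Integrable g P) :
    Integrable (fun ω => (if Z ω = a then (1:ℝ) else 0) * g ω) P :=
  hg.bdd_mul (ind_measurable hZ a).aestronglyMeasurable
    (ae_of_all _ fun ω => show ‖_‖ ≤ (1:ℝ) by by_cases h : Z ω = a <;> simp [h])

lemma setIntegral_ind_mul {Ω : Type*} [MeasurableSpace Ω] (P : Measure Ω)
    {Z : Ω → ℝ} (hZ : Measurable Z) (a : ℝ) (g : Ω → ℝ) {B : Set Ω} :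
    ∫ ω in B, (if Z ω = a then (1:ℝ) else 0) * g ω ∂P = ∫ ω in {ω | Z ω = a} ∩ B, g ω ∂P := by
  have hs : MeasurableSet {ω | Z ω = a} := hZ (measurableSet_singleton a)
  rw [show (fun ω => (if Z ω = a then (1:ℝ) else 0) * g ω) = Set.indicator {ω | Z ω = a} g from
    ind_mul_eq_indicator Z a g]
  rw [integral_indicator hs, Measure.restrict_restrict hs]

lemma setIntegral_ite_eq {Ω : Type*} [MeasurableSpace Ω] (P : Measure Ω)
    {W : Ω → ℝ} (hW : Measurable W) (v : ℝ) (g : Ω → ℝ) {B : Set Ω} :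
    ∫ ω in B, (if W ω = v then g ω else 0) ∂P = ∫ ω in {ω | W ω = v} ∩ B, g ω ∂P := by
  rw [show (fun ω => (if W ω = v then g ω else 0))
      = (fun ω => (if W ω = v then (1:ℝ) else 0) * g ω) from
    funext fun ω => by by_cases h : W ω = v <;> simp [h]]
  exact setIntegral_ind_mul P hW v g

lemma setIntegral_ite_one {Ω : Type*} [MeasurableSpace Ω] (P : Measure Ω)
    {W : Ω → ℝ} (hW : Measurable W) (v : ℝ) {B : Set Ω} :
    ∫ ω in B, (if W ω = v then (1:ℝ) else 0) ∂P = (P ({ω | W ω = v} ∩ B)).toReal := by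
  rw [setIntegral_ite_eq P hW v (fun _ => (1:ℝ)), setIntegral_const]
  simp [Measure.real]

lemma transfer_measure {Ω : Type*} [MeasurableSpace Ω] (P : Measure Ω)
    {V : Ω → ℝ × ℝ × ℝ × ℝ} (hV : Measurable V) {C B : Set Ω}
    (h : ∀ A : Set (ℝ × ℝ × ℝ × ℝ), MeasurableSet A →
      P ((V ⁻¹' A) ∩ C) * P B = P ((V ⁻¹' A) ∩ B) * P C) :
    (P B) • (P.restrict C).map V = (P C) • (P.restrict B).map V := by
  ext A hA
  rw [Measure.smul_apply, Measure.smul_apply, Measure.map_apply hV hA, Measure.map_apply hV hA,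
    Measure.restrict_apply (hV hA), Measure.restrict_apply (hV hA)]
  simp only [smul_eq_mul]
  rw [mul_comm, h A hA, mul_comm]

lemma transfer_integral {Ω : Type*} [MeasurableSpace Ω] (P : Measure Ω)
    {V : Ω → ℝ × ℝ × ℝ × ℝ} (hV : Measurable V) {C B : Set Ω}
    (h : ∀ A : Set (ℝ × ℝ × ℝ × ℝ), MeasurableSet A →
      P ((V ⁻¹' A) ∩ C) * P B = P ((V ⁻¹' A) ∩ B) * P C)
    {g : ℝ × ℝ × ℝ × ℝ → ℝ} (hg : Measurable g) :
    (P B).toReal * ∫ ω in C, g (V ω) ∂P = (P C).toReal * ∫ ω in B, g (V ω) ∂P := by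
  have h1 := transfer_measure P hV h
  have h2 : ∫ t, g t ∂((P B) • (P.restrict C).map V)
      = ∫ t, g t ∂((P C) • (P.restrict B).map V) := by rw [h1]
  rw [integral_smul_measure, integral_smul_measure,
    integral_map hV.aemeasurable hg.aestronglyMeasurable,
    integral_map hV.aemeasurable hg.aestronglyMeasurable] at h2
  simpa using h2

lemma transfer_lintegral {Ω : Type*} [MeasurableSpace Ω] (P : Measure Ω)
    {V : Ω → ℝ × ℝ × ℝ × ℝ} (hV : Measurable V) {C B : Set Ω}
    (h : ∀ A : Set (ℝ × ℝ × ℝ × ℝ), MeasurableSet A →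
      P ((V ⁻¹' A) ∩ C) * P B = P ((V ⁻¹' A) ∩ B) * P C)
    {g : ℝ × ℝ × ℝ × ℝ → ENNReal} (hg : Measurable g) :
    (P B) * ∫⁻ ω in C, g (V ω) ∂P = (P C) * ∫⁻ ω in B, g (V ω) ∂P := by
  have h1 := transfer_measure P hV h
  have h2 : ∫⁻ t, g t ∂((P B) • (P.restrict C).map V)
      = ∫⁻ t, g t ∂((P C) • (P.restrict B).map V) := by rw [h1]
  rwa [lintegral_smul_measure, lintegral_smul_measure, lintegral_map hg hV,
    lintegral_map hg hV] at h2

/-- The ψ-type function with the covariate value fixed at x. -/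
def psiX {Ω 𝓧 : Type*} [MeasurableSpace Ω] (P : Measure Ω) (X : Ω → 𝓧) (Z : Ω → ℝ)
    (x : 𝓧) (a : ℝ) (f : Ω → ℝ) : Ω → ℝ :=
  fun ω =>
    (if Z ω = a then (1 : ℝ) else 0) / condProbOn P {ω' | Z ω' = a} {ω' | X ω' = x}
        * (f ω - condMeanOn P {ω' | Z ω' = a ∧ X ω' = x} f)
      + condMeanOn P {ω' | Z ω' = a ∧ X ω' = x} f

lemma psiX_eq {Ω 𝓧 : Type*} [MeasurableSpace Ω] (P : Measure Ω) (X : Ω → 𝓧) (Z : Ω → ℝ)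
    (x : 𝓧) (a : ℝ) (f : Ω → ℝ) (m π : ℝ)
    (hm : m = condMeanOn P {ω' | Z ω' = a ∧ X ω' = x} f)
    (hπ : π = condProbOn P {ω' | Z ω' = a} {ω' | X ω' = x}) :
    psiX P X Z x a f = fun ω => (if Z ω = a then (1:ℝ) else 0) * ((f ω - m)/π) + m := by
  funext ω
  by_cases h : Z ω = a <;>
    simp only [psiX, h, if_pos, if_neg, ← hm, ← hπ, one_mul, zero_mul, zero_div,
      if_true, if_false] <;> ring

lemma psiX_integrable {Ω 𝓧 : Type*} [MeasurableSpace Ω] (P : Measure Ω) [IsFiniteMeasure P]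
    (X : Ω → 𝓧) {Z : Ω → ℝ} (x : 𝓧) (a : ℝ) {f : Ω → ℝ}
    (hZ : Measurable Z)
    (hf : Integrable f (P.restrict {ω | X ω = x})) :
    Integrable (psiX P X Z x a f) (P.restrict {ω | X ω = x}) := by
  rw [psiX_eq P X Z x a f _ _ rfl rfl]
  exact (ind_mul_integrable hZ a ((hf.sub (integrable_const _)).div_const _)).add
    (integrable_const _)

lemma psiX_setIntegral {Ω 𝓧 : Type*} [MeasurableSpace Ω] (P : Measure Ω) [IsFiniteMeasure P]
    (X : Ω → 𝓧) {Z : Ω → ℝ} (x : 𝓧) (a : ℝ) {f : Ω → ℝ}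
    (hZ : Measurable Z) (hB : MeasurableSet {ω | X ω = x})
    (hf : Integrable f (P.restrict {ω | X ω = x}))
    (hCne : P {ω | Z ω = a ∧ X ω = x} ≠ 0) :
    ∫ ω in {ω | X ω = x}, psiX P X Z x a f ω ∂P
      = condMeanOn P {ω | Z ω = a ∧ X ω = x} f * (P {ω | X ω = x}).toReal := by
  have hCeq : {ω | Z ω = a ∧ X ω = x} = {ω | Z ω = a} ∩ {ω | X ω = x} := rfl
  set B := {ω | X ω = x} with hBdef
  set C := {ω | Z ω = a ∧ X ω = x} with hC
  set m := condMeanOn P C f with hm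
  set π := condProbOn P {ω' | Z ω' = a} {ω' | X ω' = x} with hπ
  have key := psiX_eq P X Z x a f m π hm hπ
  have hfsub : Integrable (fun ω => (f ω - m)/π) (P.restrict B) :=
    (hf.sub (integrable_const _)).div_const _
  have hfm : Integrable (fun ω => (if Z ω = a then (1:ℝ) else 0) * ((f ω - m)/π))
      (P.restrict B) := ind_mul_integrable hZ a hfsub
  have hPC : (P C).toReal ≠ 0 := ENNReal.toReal_ne_zero.2 ⟨hCne, measure_ne_top _ _⟩
  calc ∫ ω in B, psiX P X Z x a f ω ∂P
      = ∫ ω in B, ((if Z ω = a then (1:ℝ) else 0) * ((f ω - m)/π) + m) ∂P := by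
        exact setIntegral_congr_fun hB (fun ω _ => by rw [key])
    _ = (∫ ω in {ω | Z ω = a} ∩ B, (f ω - m)/π ∂P) + m * (P B).toReal := by
        rw [integral_add hfm (integrable_const m), setIntegral_ind_mul P hZ a _,
          setIntegral_const]
        simp [smul_eq_mul, mul_comm, Measure.real]
    _ = m * (P B).toReal := by
        have hCeq2 : ({ω | Z ω = a} ∩ B : Set Ω) = C := hCeq.symm
        rw [hCeq2]
        have h1 : ∫ ω in C, (f ω - m)/π ∂P = ((∫ ω in C, f ω ∂P) - m * (P C).toReal)/π := by
          rw [integral_div, integral_sub (hf.mono_measure (Measure.restrict_mono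
            (fun ω h => h.2) le_rfl))
            (integrable_const m), setIntegral_const]
          simp [smul_eq_mul, mul_comm, Measure.real]
        have h2 : ∫ ω in C, f ω ∂P = m * (P C).toReal := by
          rw [hm]; unfold condMeanOn; field_simp
        rw [h1, h2]
        simp

/-- One-step identification of the CPCEs: for any measurable preliminary function,
updating it by the EIF residual recovers the true CPCE. -/
theorem cpce_one_step_identification
    {Ω : Type*} [MeasurableSpace Ω] (P : Measure Ω) [IsProbabilityMeasure P]
    {d : ℕ} (X : Ω → Fin d → ℝ) (Y Z S Y1 Y0 S1 S0 : Ω → ℝ)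
    (hXm : Measurable X) (hYm : Measurable Y) (hZm : Measurable Z) (hSm : Measurable S)
    (hY1m : Measurable Y1) (hY0m : Measurable Y0) (hS1m : Measurable S1) (hS0m : Measurable S0)
    (hZ01 : ∀ ω, Z ω = 0 ∨ Z ω = 1) (hS01 : ∀ ω, S ω = 0 ∨ S ω = 1)
    (hS1b : ∀ ω, S1 ω = 0 ∨ S1 ω = 1) (hS0b : ∀ ω, S0 ω = 0 ∨ S0 ω = 1)
    -- Assumption 1 (consistency)
    (hA1 : ∀ ω, Y ω = Y1 ω * Z ω + Y0 ω * (1 - Z ω) ∧ S ω = S1 ω * Z ω + S0 ω * (1 - Z ω))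
    -- Assumption 2 (treatment ignorability): (Y(1),Y(0),S(1),S(0)) ⟂ Z | X
    (hA2 : ∀ (x : Fin d → ℝ) (A : Set (ℝ × ℝ × ℝ × ℝ)), MeasurableSet A → ∀ z : ℝ,
      P ({ω | (Y1 ω, Y0 ω, S1 ω, S0 ω) ∈ A} ∩ {ω | Z ω = z} ∩ {ω | X ω = x})
          * P {ω | X ω = x}
        = P ({ω | (Y1 ω, Y0 ω, S1 ω, S0 ω) ∈ A} ∩ {ω | X ω = x})
            * P ({ω | Z ω = z} ∩ {ω | X ω = x}))
    -- Assumption 3 (monotonicity)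
    (hA3 : ∀ᵐ ω ∂P, S0 ω ≤ S1 ω)
    -- Assumption 4 (principal ignorability)
    (hA4 : ∀ x : Fin d → ℝ, P {ω | X ω = x} ≠ 0 →
      condMeanOn P {ω | S1 ω = 1 ∧ S0 ω = 1 ∧ X ω = x} Y1
          = condMeanOn P {ω | S1 ω = 1 ∧ S0 ω = 0 ∧ X ω = x} Y1 ∧
        condMeanOn P {ω | S1 ω = 0 ∧ S0 ω = 0 ∧ X ω = x} Y0
          = condMeanOn P {ω | S1 ω = 1 ∧ S0 ω = 0 ∧ X ω = x} Y0)
    (hYi : Integrable Y P)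
    (tck00 tck10 tck11 : (Fin d → ℝ) → ℝ)
    (htck00 : Measurable tck00) (htck10 : Measurable tck10) (htck11 : Measurable tck11) :
    ∀ x : Fin d → ℝ,
      P {ω | X ω = x} ≠ 0 →
      (∀ z : ℝ, z = 0 ∨ z = 1 → P {ω | Z ω = z ∧ X ω = x} ≠ 0) →
      (∀ z s : ℝ, (z = 0 ∨ z = 1) → (s = 0 ∨ s = 1) →
        P {ω | Z ω = z ∧ S ω = s ∧ X ω = x} ≠ 0) →
      (∀ a b : ℝ, ((a = 1 ∧ b = 1) ∨ (a = 1 ∧ b = 0) ∨ (a = 0 ∧ b = 0)) →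
        P {ω | S1 ω = a ∧ S0 ω = b ∧ X ω = x} ≠ 0) →
      0 < piX P X Z x → piX P X Z x < 1 →
      0 < pZs P X Z S 0 x → pZs P X Z S 1 x < 1 →
      pZs P X Z S 0 x < pZs P X Z S 1 x →
      (tauPO P X S1 S0 Y1 Y0 0 0 x
          = condMeanOn P {ω | X ω = x}
              (fun ω =>
                tck00 (X ω)
                  + (phiA1_00 P X Z S Y ω - phiA0_00 P X Z S Y ω
                      - tck00 (X ω) * gA00 P X Z S ω)
                    / (1 - pZs P X Z S 1 (X ω)))) ∧
      (tauPO P X S1 S0 Y1 Y0 1 0 x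
          = condMeanOn P {ω | X ω = x}
              (fun ω =>
                tck10 (X ω)
                  + (phiA1_10 P X Z S Y ω - phiA0_10 P X Z S Y ω
                      - tck10 (X ω) * gA10 P X Z S ω)
                    / (pZs P X Z S 1 (X ω) - pZs P X Z S 0 (X ω)))) ∧
      (tauPO P X S1 S0 Y1 Y0 1 1 x
          = condMeanOn P {ω | X ω = x}
              (fun ω =>
                tck11 (X ω)
                  + (phiA1_11 P X Z S Y ω - phiA0_11 P X Z S Y ω
                      - tck11 (X ω) * gA11 P X Z S ω)
                    / (pZs P X Z S 0 (X ω)))) := by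
  intro x hBx hZx hZSx hstr hpi0 hpi1 hp0x hp1x hp01x
  clear hpi0 hpi1
  have hBmeas : MeasurableSet {ω | X ω = x} := hXm (measurableSet_singleton x)
  have hZset : ∀ a : ℝ, MeasurableSet {ω | Z ω = a} := fun a => hZm (measurableSet_singleton a)
  have hCmeas : ∀ z : ℝ, MeasurableSet {ω | Z ω = z ∧ X ω = x} := fun z =>
    (hZset z).inter hBmeas
  have hDmeas : ∀ z s : ℝ, MeasurableSet {ω | Z ω = z ∧ S ω = s ∧ X ω = x} := fun z s =>
    (hZset z).inter ((hSm (measurableSet_singleton s)).inter hBmeas)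
  have hEmeas : ∀ a b : ℝ, MeasurableSet {ω | S1 ω = a ∧ S0 ω = b ∧ X ω = x} := fun a b =>
    (hS1m (measurableSet_singleton a)).inter ((hS0m (measurableSet_singleton b)).inter hBmeas)
  have hPBne : (P {ω | X ω = x}).toReal ≠ 0 :=
    ENNReal.toReal_ne_zero.2 ⟨hBx, measure_ne_top _ _⟩
  have hPCne : ∀ z : ℝ, z = 0 ∨ z = 1 → (P {ω | Z ω = z ∧ X ω = x}).toReal ≠ 0 := fun z hz =>
    ENNReal.toReal_ne_zero.2 ⟨hZx z hz, measure_ne_top _ _⟩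
  have hPDne : ∀ z s : ℝ, (z = 0 ∨ z = 1) → (s = 0 ∨ s = 1) →
      (P {ω | Z ω = z ∧ S ω = s ∧ X ω = x}).toReal ≠ 0 := fun z s hz hs =>
    ENNReal.toReal_ne_zero.2 ⟨hZSx z s hz hs, measure_ne_top _ _⟩
  have hqne : ∀ a b : ℝ, ((a = 1 ∧ b = 1) ∨ (a = 1 ∧ b = 0) ∨ (a = 0 ∧ b = 0)) →
      (P {ω | S1 ω = a ∧ S0 ω = b ∧ X ω = x}).toReal ≠ 0 := fun a b h =>
    ENNReal.toReal_ne_zero.2 ⟨hstr a b h, measure_ne_top _ _⟩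
  have hcons1 : ∀ ω, Z ω = 1 → S ω = S1 ω ∧ Y ω = Y1 ω := by
    intro ω hz
    obtain ⟨hY, hS⟩ := hA1 ω
    rw [hY, hS, hz]
    constructor <;> ring
  have hcons0 : ∀ ω, Z ω = 0 → S ω = S0 ω ∧ Y ω = Y0 ω := by
    intro ω hz
    obtain ⟨hY, hS⟩ := hA1 ω
    rw [hY, hS, hz]
    constructor <;> ring
  have hS1C : ∀ s : ℝ, ({ω | S1 ω = s} : Set Ω) ∩ {ω | Z ω = 1 ∧ X ω = x}
      = {ω | Z ω = 1 ∧ S ω = s ∧ X ω = x} := by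
    intro s; ext ω
    simp only [Set.mem_inter_iff, Set.mem_setOf_eq]
    constructor
    · rintro ⟨h1, hz, hxx⟩
      exact ⟨hz, by rw [(hcons1 ω hz).1, h1], hxx⟩
    · rintro ⟨hz, hs, hxx⟩
      exact ⟨by rw [← (hcons1 ω hz).1, hs], hz, hxx⟩
  have hS0C : ∀ s : ℝ, ({ω | S0 ω = s} : Set Ω) ∩ {ω | Z ω = 0 ∧ X ω = x}
      = {ω | Z ω = 0 ∧ S ω = s ∧ X ω = x} := by
    intro s; ext ω
    simp only [Set.mem_inter_iff, Set.mem_setOf_eq]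
    constructor
    · rintro ⟨h1, hz, hxx⟩
      exact ⟨hz, by rw [(hcons0 ω hz).1, h1], hxx⟩
    · rintro ⟨hz, hs, hxx⟩
      exact ⟨by rw [← (hcons0 ω hz).1, hs], hz, hxx⟩
  have hDset : ∀ z s : ℝ, ({ω | S ω = s} : Set Ω) ∩ {ω | Z ω = z ∧ X ω = x}
      = {ω | Z ω = z ∧ S ω = s ∧ X ω = x} := by
    intro z s; ext ω
    simp only [Set.mem_inter_iff, Set.mem_setOf_eq]
    tauto
  have hVm : Measurable (fun ω : Ω => (Y1 ω, Y0 ω, S1 ω, S0 ω)) :=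
    hY1m.prodMk (hY0m.prodMk (hS1m.prodMk hS0m))
  have hA2' : ∀ z : ℝ, ∀ A : Set (ℝ × ℝ × ℝ × ℝ), MeasurableSet A →
      P (((fun ω : Ω => (Y1 ω, Y0 ω, S1 ω, S0 ω)) ⁻¹' A) ∩ {ω | Z ω = z ∧ X ω = x})
          * P {ω | X ω = x}
        = P (((fun ω : Ω => (Y1 ω, Y0 ω, S1 ω, S0 ω)) ⁻¹' A) ∩ {ω | X ω = x})
            * P {ω | Z ω = z ∧ X ω = x} := by
    intro z A hA
    have h := hA2 x A hA z
    rw [Set.inter_assoc] at h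
    exact h
  have hmS1co : Measurable (fun t : ℝ × ℝ × ℝ × ℝ => t.2.2.1) := measurable_snd.snd.fst
  have hmS0co : Measurable (fun t : ℝ × ℝ × ℝ × ℝ => t.2.2.2) := measurable_snd.snd.snd
  have hTY1 : ∀ v : ℝ,
      (P {ω | X ω = x}).toReal * ∫ ω in {ω | Z ω = 1 ∧ S ω = v ∧ X ω = x}, Y ω ∂P
        = (P {ω | Z ω = 1 ∧ X ω = x}).toReal
            * ∫ ω in {ω | S1 ω = v} ∩ {ω | X ω = x}, Y1 ω ∂P := by
    intro v
    have hg : Measurable (fun t : ℝ × ℝ × ℝ × ℝ => if t.2.2.1 = v then t.1 else 0) :=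
      Measurable.ite (hmS1co (measurableSet_singleton v)) measurable_fst measurable_const
    have h := transfer_integral P hVm (hA2' 1) hg
    have h' : (P {ω | X ω = x}).toReal
          * ∫ ω in {ω | Z ω = 1 ∧ X ω = x}, (if S1 ω = v then Y1 ω else 0) ∂P
        = (P {ω | Z ω = 1 ∧ X ω = x}).toReal
            * ∫ ω in {ω | X ω = x}, (if S1 ω = v then Y1 ω else 0) ∂P := h
    rw [setIntegral_ite_eq P hS1m v Y1, setIntegral_ite_eq P hS1m v Y1, hS1C v] at h'
    rw [show (∫ ω in {ω | Z ω = 1 ∧ S ω = v ∧ X ω = x}, Y1 ω ∂P)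
        = ∫ ω in {ω | Z ω = 1 ∧ S ω = v ∧ X ω = x}, Y ω ∂P from
      setIntegral_congr_fun (hDmeas 1 v) (fun ω hω => ((hcons1 ω hω.1).2).symm)] at h'
    exact h'
  have hTY0 : ∀ v : ℝ,
      (P {ω | X ω = x}).toReal * ∫ ω in {ω | Z ω = 0 ∧ S ω = v ∧ X ω = x}, Y ω ∂P
        = (P {ω | Z ω = 0 ∧ X ω = x}).toReal
            * ∫ ω in {ω | S0 ω = v} ∩ {ω | X ω = x}, Y0 ω ∂P := by
    intro v
    have hg : Measurable (fun t : ℝ × ℝ × ℝ × ℝ => if t.2.2.2 = v then t.2.1 else 0) :=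
      Measurable.ite (hmS0co (measurableSet_singleton v)) measurable_snd.fst measurable_const
    have h := transfer_integral P hVm (hA2' 0) hg
    have h' : (P {ω | X ω = x}).toReal
          * ∫ ω in {ω | Z ω = 0 ∧ X ω = x}, (if S0 ω = v then Y0 ω else 0) ∂P
        = (P {ω | Z ω = 0 ∧ X ω = x}).toReal
            * ∫ ω in {ω | X ω = x}, (if S0 ω = v then Y0 ω else 0) ∂P := h
    rw [setIntegral_ite_eq P hS0m v Y0, setIntegral_ite_eq P hS0m v Y0, hS0C v] at h'
    rw [show (∫ ω in {ω | Z ω = 0 ∧ S ω = v ∧ X ω = x}, Y0 ω ∂P)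
        = ∫ ω in {ω | Z ω = 0 ∧ S ω = v ∧ X ω = x}, Y ω ∂P from
      setIntegral_congr_fun (hDmeas 0 v) (fun ω hω => ((hcons0 ω hω.1).2).symm)] at h'
    exact h'
  have hTP1 : ∀ v : ℝ,
      (P {ω | X ω = x}).toReal * (P {ω | Z ω = 1 ∧ S ω = v ∧ X ω = x}).toReal
        = (P {ω | Z ω = 1 ∧ X ω = x}).toReal
            * (P ({ω | S1 ω = v} ∩ {ω | X ω = x})).toReal := by
    intro v
    have hg : Measurable (fun t : ℝ × ℝ × ℝ × ℝ => if t.2.2.1 = v then (1:ℝ) else 0) :=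
      Measurable.ite (hmS1co (measurableSet_singleton v)) measurable_const measurable_const
    have h := transfer_integral P hVm (hA2' 1) hg
    have h' : (P {ω | X ω = x}).toReal
          * ∫ ω in {ω | Z ω = 1 ∧ X ω = x}, (if S1 ω = v then (1:ℝ) else 0) ∂P
        = (P {ω | Z ω = 1 ∧ X ω = x}).toReal
            * ∫ ω in {ω | X ω = x}, (if S1 ω = v then (1:ℝ) else 0) ∂P := h
    rw [setIntegral_ite_one P hS1m v, setIntegral_ite_one P hS1m v, hS1C v] at h'
    exact h'
  have hTP0 : ∀ v : ℝ,
      (P {ω | X ω = x}).toReal * (P {ω | Z ω = 0 ∧ S ω = v ∧ X ω = x}).toReal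
        = (P {ω | Z ω = 0 ∧ X ω = x}).toReal
            * (P ({ω | S0 ω = v} ∩ {ω | X ω = x})).toReal := by
    intro v
    have hg : Measurable (fun t : ℝ × ℝ × ℝ × ℝ => if t.2.2.2 = v then (1:ℝ) else 0) :=
      Measurable.ite (hmS0co (measurableSet_singleton v)) measurable_const measurable_const
    have h := transfer_integral P hVm (hA2' 0) hg
    have h' : (P {ω | X ω = x}).toReal
          * ∫ ω in {ω | Z ω = 0 ∧ X ω = x}, (if S0 ω = v then (1:ℝ) else 0) ∂P
        = (P {ω | Z ω = 0 ∧ X ω = x}).toReal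
            * ∫ ω in {ω | X ω = x}, (if S0 ω = v then (1:ℝ) else 0) ∂P := h
    rw [setIntegral_ite_one P hS0m v, setIntegral_ite_one P hS0m v, hS0C v] at h'
    exact h'
  have hY1B : Integrable Y1 (P.restrict {ω | X ω = x}) := by
    have hg : Measurable (fun t : ℝ × ℝ × ℝ × ℝ => (‖t.1‖₊ : ENNReal)) :=
      measurable_fst.nnnorm.coe_nnreal_ennreal
    have h := transfer_lintegral P hVm (hA2' 1) hg
    have h' : P {ω | X ω = x} * ∫⁻ ω in {ω | Z ω = 1 ∧ X ω = x}, (‖Y1 ω‖₊ : ENNReal) ∂P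
        = P {ω | Z ω = 1 ∧ X ω = x} * ∫⁻ ω in {ω | X ω = x}, (‖Y1 ω‖₊ : ENNReal) ∂P := h
    rw [show (∫⁻ ω in {ω | Z ω = 1 ∧ X ω = x}, (‖Y1 ω‖₊ : ENNReal) ∂P)
        = ∫⁻ ω in {ω | Z ω = 1 ∧ X ω = x}, (‖Y ω‖₊ : ENNReal) ∂P from
      setLIntegral_congr_fun (hCmeas 1)
        (fun ω hω => by simp only [(hcons1 ω hω.1).2])] at h'
    refine ⟨hY1m.aestronglyMeasurable, ?_⟩
    have hfin : P {ω | Z ω = 1 ∧ X ω = x}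
        * ∫⁻ ω in {ω | X ω = x}, (‖Y1 ω‖₊ : ENNReal) ∂P ≠ ⊤ := by
      rw [← h']
      exact ENNReal.mul_ne_top (measure_ne_top _ _)
        (ne_top_of_le_ne_top (lt_top_iff_ne_top.1 hYi.2) (setLIntegral_le_lintegral _ _))
    have hne : ∫⁻ ω in {ω | X ω = x}, (‖Y1 ω‖₊ : ENNReal) ∂P ≠ ⊤ := by
      intro htop
      rw [htop, ENNReal.mul_top (hZx 1 (Or.inr rfl))] at hfin
      exact hfin rfl
    exact lt_top_iff_ne_top.2 hne
  have hY0B : Integrable Y0 (P.restrict {ω | X ω = x}) := by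
    have hg : Measurable (fun t : ℝ × ℝ × ℝ × ℝ => (‖t.2.1‖₊ : ENNReal)) :=
      measurable_snd.fst.nnnorm.coe_nnreal_ennreal
    have h := transfer_lintegral P hVm (hA2' 0) hg
    have h' : P {ω | X ω = x} * ∫⁻ ω in {ω | Z ω = 0 ∧ X ω = x}, (‖Y0 ω‖₊ : ENNReal) ∂P
        = P {ω | Z ω = 0 ∧ X ω = x} * ∫⁻ ω in {ω | X ω = x}, (‖Y0 ω‖₊ : ENNReal) ∂P := h
    rw [show (∫⁻ ω in {ω | Z ω = 0 ∧ X ω = x}, (‖Y0 ω‖₊ : ENNReal) ∂P)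
        = ∫⁻ ω in {ω | Z ω = 0 ∧ X ω = x}, (‖Y ω‖₊ : ENNReal) ∂P from
      setLIntegral_congr_fun (hCmeas 0)
        (fun ω hω => by simp only [(hcons0 ω hω.1).2])] at h'
    refine ⟨hY0m.aestronglyMeasurable, ?_⟩
    have hfin : P {ω | Z ω = 0 ∧ X ω = x}
        * ∫⁻ ω in {ω | X ω = x}, (‖Y0 ω‖₊ : ENNReal) ∂P ≠ ⊤ := by
      rw [← h']
      exact ENNReal.mul_ne_top (measure_ne_top _ _)
        (ne_top_of_le_ne_top (lt_top_iff_ne_top.1 hYi.2) (setLIntegral_le_lintegral _ _))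
    have hne : ∫⁻ ω in {ω | X ω = x}, (‖Y0 ω‖₊ : ENNReal) ∂P ≠ ⊤ := by
      intro htop
      rw [htop, ENNReal.mul_top (hZx 0 (Or.inl rfl))] at hfin
      exact hfin rfl
    exact lt_top_iff_ne_top.2 hne
  have hE11ae : ({ω | S1 ω = 1 ∧ S0 ω = 1 ∧ X ω = x} : Set Ω) =ᵐ[P]
      (({ω | S0 ω = 1} ∩ {ω | X ω = x} : Set Ω)) := by
    rw [Filter.eventuallyEq_set]
    filter_upwards [hA3] with ω hle
    simp only [Set.mem_setOf_eq, Set.mem_inter_iff]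
    constructor
    · rintro ⟨h1, h0, hxx⟩
      exact ⟨h0, hxx⟩
    · rintro ⟨h0, hxx⟩
      rcases hS1b ω with h | h
      · rw [h0, h] at hle
        norm_num at hle
      · exact ⟨h, h0, hxx⟩
  have hE00ae : ({ω | S1 ω = 0 ∧ S0 ω = 0 ∧ X ω = x} : Set Ω) =ᵐ[P]
      (({ω | S1 ω = 0} ∩ {ω | X ω = x} : Set Ω)) := by
    rw [Filter.eventuallyEq_set]
    filter_upwards [hA3] with ω hle
    simp only [Set.mem_setOf_eq, Set.mem_inter_iff]
    constructor
    · rintro ⟨h1, h0, hxx⟩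
      exact ⟨h1, hxx⟩
    · rintro ⟨h1, hxx⟩
      rcases hS0b ω with h | h
      · exact ⟨h1, h, hxx⟩
      · rw [h1, h] at hle
        norm_num at hle
  have hU1 : ({ω | S1 ω = 1} ∩ {ω | X ω = x} : Set Ω)
      = {ω | S1 ω = 1 ∧ S0 ω = 1 ∧ X ω = x} ∪ {ω | S1 ω = 1 ∧ S0 ω = 0 ∧ X ω = x} := by
    ext ω
    simp only [Set.mem_inter_iff, Set.mem_setOf_eq, Set.mem_union]
    constructor
    · rintro ⟨h1, hxx⟩
      rcases hS0b ω with h | h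
      · right; exact ⟨h1, h, hxx⟩
      · left; exact ⟨h1, h, hxx⟩
    · rintro (⟨h1, _, hxx⟩ | ⟨h1, _, hxx⟩) <;> exact ⟨h1, hxx⟩
  have hU0 : ({ω | S0 ω = 0} ∩ {ω | X ω = x} : Set Ω)
      = {ω | S1 ω = 0 ∧ S0 ω = 0 ∧ X ω = x} ∪ {ω | S1 ω = 1 ∧ S0 ω = 0 ∧ X ω = x} := by
    ext ω
    simp only [Set.mem_inter_iff, Set.mem_setOf_eq, Set.mem_union]
    constructor
    · rintro ⟨h0, hxx⟩
      rcases hS1b ω with h | h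
      · left; exact ⟨h, h0, hxx⟩
      · right; exact ⟨h, h0, hxx⟩
    · rintro (⟨_, h0, hxx⟩ | ⟨_, h0, hxx⟩) <;> exact ⟨h0, hxx⟩
  have hdis1 : Disjoint ({ω | S1 ω = 1 ∧ S0 ω = 1 ∧ X ω = x} : Set Ω)
      {ω | S1 ω = 1 ∧ S0 ω = 0 ∧ X ω = x} := by
    rw [Set.disjoint_left]
    rintro ω ⟨_, h1, _⟩ ⟨_, h0, _⟩
    rw [h1] at h0
    norm_num at h0
  have hdis0 : Disjoint ({ω | S1 ω = 0 ∧ S0 ω = 0 ∧ X ω = x} : Set Ω)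
      {ω | S1 ω = 1 ∧ S0 ω = 0 ∧ X ω = x} := by
    rw [Set.disjoint_left]
    rintro ω ⟨h1, _, _⟩ ⟨h1', _, _⟩
    rw [h1] at h1'
    norm_num at h1'
  have hsubE : ∀ a b : ℝ, {ω | S1 ω = a ∧ S0 ω = b ∧ X ω = x} ⊆ {ω | X ω = x} :=
    fun a b ω h => h.2.2
  have hIntY1E : ∀ a b : ℝ, IntegrableOn Y1 {ω | S1 ω = a ∧ S0 ω = b ∧ X ω = x} P :=
    fun a b => hY1B.mono_measure (Measure.restrict_mono (hsubE a b) le_rfl)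
  have hIntY0E : ∀ a b : ℝ, IntegrableOn Y0 {ω | S1 ω = a ∧ S0 ω = b ∧ X ω = x} P :=
    fun a b => hY0B.mono_measure (Measure.restrict_mono (hsubE a b) le_rfl)
  -- conditional means over principal strata
  have hcmE11Y1 : condMeanOn P {ω | S1 ω = 1 ∧ S0 ω = 1 ∧ X ω = x} Y1
      = muZS P X Z S Y 1 1 x := by
    rw [show muZS P X Z S Y 1 1 x
        = (∫ ω in {ω | Z ω = 1 ∧ S ω = 1 ∧ X ω = x}, Y ω ∂P)
          / (P {ω | Z ω = 1 ∧ S ω = 1 ∧ X ω = x}).toReal from rfl]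
    rw [eq_div_iff (hPDne 1 1 (Or.inr rfl) (Or.inr rfl))]
    apply mul_left_cancel₀ hPBne
    have hT := hTY1 1
    have hP := hTP1 1
    have hsum : ∫ ω in {ω | S1 ω = 1} ∩ {ω | X ω = x}, Y1 ω ∂P
        = condMeanOn P {ω | S1 ω = 1 ∧ S0 ω = 1 ∧ X ω = x} Y1
            * ((P {ω | S1 ω = 1 ∧ S0 ω = 1 ∧ X ω = x}).toReal
              + (P {ω | S1 ω = 1 ∧ S0 ω = 0 ∧ X ω = x}).toReal) := by
      rw [hU1, setIntegral_union hdis1 (hEmeas 1 0) (hIntY1E 1 1) (hIntY1E 1 0),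
        integral_eq_condMeanOn_mul Y1 (hqne 1 1 (Or.inl ⟨rfl, rfl⟩)),
        integral_eq_condMeanOn_mul Y1 (hqne 1 0 (Or.inr (Or.inl ⟨rfl, rfl⟩))),
        ← (hA4 x hBx).1]
      ring
    have hmeq : (P ({ω | S1 ω = 1} ∩ {ω | X ω = x})).toReal
        = (P {ω | S1 ω = 1 ∧ S0 ω = 1 ∧ X ω = x}).toReal
          + (P {ω | S1 ω = 1 ∧ S0 ω = 0 ∧ X ω = x}).toReal := by
      rw [hU1, measure_union hdis1 (hEmeas 1 0),
        ENNReal.toReal_add (measure_ne_top _ _) (measure_ne_top _ _)]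
    rw [hsum] at hT
    rw [hmeq] at hP
    linear_combination condMeanOn P {ω | S1 ω = 1 ∧ S0 ω = 1 ∧ X ω = x} Y1 * hP - hT
  have hcmE00Y0 : condMeanOn P {ω | S1 ω = 0 ∧ S0 ω = 0 ∧ X ω = x} Y0
      = muZS P X Z S Y 0 0 x := by
    rw [show muZS P X Z S Y 0 0 x
        = (∫ ω in {ω | Z ω = 0 ∧ S ω = 0 ∧ X ω = x}, Y ω ∂P)
          / (P {ω | Z ω = 0 ∧ S ω = 0 ∧ X ω = x}).toReal from rfl]
    rw [eq_div_iff (hPDne 0 0 (Or.inl rfl) (Or.inl rfl))]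
    apply mul_left_cancel₀ hPBne
    have hT := hTY0 0
    have hP := hTP0 0
    have hsum : ∫ ω in {ω | S0 ω = 0} ∩ {ω | X ω = x}, Y0 ω ∂P
        = condMeanOn P {ω | S1 ω = 0 ∧ S0 ω = 0 ∧ X ω = x} Y0
            * ((P {ω | S1 ω = 0 ∧ S0 ω = 0 ∧ X ω = x}).toReal
              + (P {ω | S1 ω = 1 ∧ S0 ω = 0 ∧ X ω = x}).toReal) := by
      rw [hU0, setIntegral_union hdis0 (hEmeas 1 0) (hIntY0E 0 0) (hIntY0E 1 0),
        integral_eq_condMeanOn_mul Y0 (hqne 0 0 (Or.inr (Or.inr ⟨rfl, rfl⟩))),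
        integral_eq_condMeanOn_mul Y0 (hqne 1 0 (Or.inr (Or.inl ⟨rfl, rfl⟩))),
        ← (hA4 x hBx).2]
      ring
    have hmeq : (P ({ω | S0 ω = 0} ∩ {ω | X ω = x})).toReal
        = (P {ω | S1 ω = 0 ∧ S0 ω = 0 ∧ X ω = x}).toReal
          + (P {ω | S1 ω = 1 ∧ S0 ω = 0 ∧ X ω = x}).toReal := by
      rw [hU0, measure_union hdis0 (hEmeas 1 0),
        ENNReal.toReal_add (measure_ne_top _ _) (measure_ne_top _ _)]
    rw [hsum] at hT
    rw [hmeq] at hP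
    linear_combination condMeanOn P {ω | S1 ω = 0 ∧ S0 ω = 0 ∧ X ω = x} Y0 * hP - hT
  have hcmE11Y0 : condMeanOn P {ω | S1 ω = 1 ∧ S0 ω = 1 ∧ X ω = x} Y0
      = muZS P X Z S Y 0 1 x := by
    rw [show muZS P X Z S Y 0 1 x
        = (∫ ω in {ω | Z ω = 0 ∧ S ω = 1 ∧ X ω = x}, Y ω ∂P)
          / (P {ω | Z ω = 0 ∧ S ω = 1 ∧ X ω = x}).toReal from rfl]
    rw [eq_div_iff (hPDne 0 1 (Or.inl rfl) (Or.inr rfl))]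
    apply mul_left_cancel₀ hPBne
    have hT := hTY0 1
    have hP := hTP0 1
    have hIeq : ∫ ω in {ω | S0 ω = 1} ∩ {ω | X ω = x}, Y0 ω ∂P
        = condMeanOn P {ω | S1 ω = 1 ∧ S0 ω = 1 ∧ X ω = x} Y0
            * (P ({ω | S0 ω = 1} ∩ {ω | X ω = x})).toReal := by
      rw [← setIntegral_congr_set hE11ae, ← measure_congr hE11ae,
        integral_eq_condMeanOn_mul Y0 (hqne 1 1 (Or.inl ⟨rfl, rfl⟩))]
    rw [hIeq] at hT
    linear_combination condMeanOn P {ω | S1 ω = 1 ∧ S0 ω = 1 ∧ X ω = x} Y0 * hP - hT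
  have hcmE00Y1 : condMeanOn P {ω | S1 ω = 0 ∧ S0 ω = 0 ∧ X ω = x} Y1
      = muZS P X Z S Y 1 0 x := by
    rw [show muZS P X Z S Y 1 0 x
        = (∫ ω in {ω | Z ω = 1 ∧ S ω = 0 ∧ X ω = x}, Y ω ∂P)
          / (P {ω | Z ω = 1 ∧ S ω = 0 ∧ X ω = x}).toReal from rfl]
    rw [eq_div_iff (hPDne 1 0 (Or.inr rfl) (Or.inl rfl))]
    apply mul_left_cancel₀ hPBne
    have hT := hTY1 0
    have hP := hTP1 0
    have hIeq : ∫ ω in {ω | S1 ω = 0} ∩ {ω | X ω = x}, Y1 ω ∂P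
        = condMeanOn P {ω | S1 ω = 0 ∧ S0 ω = 0 ∧ X ω = x} Y1
            * (P ({ω | S1 ω = 0} ∩ {ω | X ω = x})).toReal := by
      rw [← setIntegral_congr_set hE00ae, ← measure_congr hE00ae,
        integral_eq_condMeanOn_mul Y1 (hqne 0 0 (Or.inr (Or.inr ⟨rfl, rfl⟩)))]
    rw [hIeq] at hT
    linear_combination condMeanOn P {ω | S1 ω = 0 ∧ S0 ω = 0 ∧ X ω = x} Y1 * hP - hT
  have hcmE10Y1 : condMeanOn P {ω | S1 ω = 1 ∧ S0 ω = 0 ∧ X ω = x} Y1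
      = muZS P X Z S Y 1 1 x := by
    rw [← (hA4 x hBx).1]
    exact hcmE11Y1
  have hcmE10Y0 : condMeanOn P {ω | S1 ω = 1 ∧ S0 ω = 0 ∧ X ω = x} Y0
      = muZS P X Z S Y 0 0 x := by
    rw [← (hA4 x hBx).2]
    exact hcmE00Y0
  have hTau11 : tauPO P X S1 S0 Y1 Y0 1 1 x = muZS P X Z S Y 1 1 x - muZS P X Z S Y 0 1 x := by
    unfold tauPO
    rw [condMeanOn_sub' (hIntY1E 1 1) (hIntY0E 1 1), hcmE11Y1, hcmE11Y0]
  have hTau10 : tauPO P X S1 S0 Y1 Y0 1 0 x = muZS P X Z S Y 1 1 x - muZS P X Z S Y 0 0 x := by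
    unfold tauPO
    rw [condMeanOn_sub' (hIntY1E 1 0) (hIntY0E 1 0), hcmE10Y1, hcmE10Y0]
  have hTau00 : tauPO P X S1 S0 Y1 Y0 0 0 x = muZS P X Z S Y 1 0 x - muZS P X Z S Y 0 0 x := by
    unfold tauPO
    rw [condMeanOn_sub' (hIntY1E 0 0) (hIntY0E 0 0), hcmE00Y1, hcmE00Y0]

  -- observed-cell calculus
  have hCU : ∀ z : ℝ, ({ω | Z ω = z ∧ X ω = x} : Set Ω)
      = {ω | Z ω = z ∧ S ω = 1 ∧ X ω = x} ∪ {ω | Z ω = z ∧ S ω = 0 ∧ X ω = x} := by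
    intro z; ext ω
    simp only [Set.mem_setOf_eq, Set.mem_union]
    constructor
    · rintro ⟨hz, hxx⟩
      rcases hS01 ω with h | h
      · right; exact ⟨hz, h, hxx⟩
      · left; exact ⟨hz, h, hxx⟩
    · rintro (⟨hz, _, hxx⟩ | ⟨hz, _, hxx⟩) <;> exact ⟨hz, hxx⟩
  have hdisD : ∀ z : ℝ, Disjoint ({ω | Z ω = z ∧ S ω = 1 ∧ X ω = x} : Set Ω)
      {ω | Z ω = z ∧ S ω = 0 ∧ X ω = x} := by
    intro z
    rw [Set.disjoint_left]
    rintro ω ⟨_, h1, _⟩ ⟨_, h0, _⟩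
    rw [h1] at h0
    norm_num at h0
  have hsplit : ∀ z : ℝ, (P {ω | Z ω = z ∧ X ω = x}).toReal
      = (P {ω | Z ω = z ∧ S ω = 1 ∧ X ω = x}).toReal
        + (P {ω | Z ω = z ∧ S ω = 0 ∧ X ω = x}).toReal := fun z => by
    rw [hCU z, measure_union (hdisD z) (hDmeas z 0),
      ENNReal.toReal_add (measure_ne_top _ _) (measure_ne_top _ _)]
  have hcellYS : ∀ z : ℝ, ∫ ω in {ω | Z ω = z ∧ X ω = x}, Y ω * S ω ∂P
      = ∫ ω in {ω | Z ω = z ∧ S ω = 1 ∧ X ω = x}, Y ω ∂P := by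
    intro z
    rw [show (∫ ω in {ω | Z ω = z ∧ X ω = x}, Y ω * S ω ∂P)
        = ∫ ω in {ω | Z ω = z ∧ X ω = x}, (if S ω = 1 then Y ω else 0) ∂P from
      setIntegral_congr_fun (hCmeas z) (fun ω _ => by rcases hS01 ω with h | h <;> simp [h]),
      setIntegral_ite_eq P hSm 1 Y, hDset z 1]
  have hcellYm : ∀ z : ℝ, ∫ ω in {ω | Z ω = z ∧ X ω = x}, Y ω * (1 - S ω) ∂P
      = ∫ ω in {ω | Z ω = z ∧ S ω = 0 ∧ X ω = x}, Y ω ∂P := by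
    intro z
    rw [show (∫ ω in {ω | Z ω = z ∧ X ω = x}, Y ω * (1 - S ω) ∂P)
        = ∫ ω in {ω | Z ω = z ∧ X ω = x}, (if S ω = 0 then Y ω else 0) ∂P from
      setIntegral_congr_fun (hCmeas z) (fun ω _ => by rcases hS01 ω with h | h <;> simp [h]),
      setIntegral_ite_eq P hSm 0 Y, hDset z 0]
  have hcellS : ∀ z : ℝ, ∫ ω in {ω | Z ω = z ∧ X ω = x}, S ω ∂P
      = (P {ω | Z ω = z ∧ S ω = 1 ∧ X ω = x}).toReal := by
    intro z
    rw [show (∫ ω in {ω | Z ω = z ∧ X ω = x}, S ω ∂P)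
        = ∫ ω in {ω | Z ω = z ∧ X ω = x}, (if S ω = 1 then (1:ℝ) else 0) ∂P from
      setIntegral_congr_fun (hCmeas z) (fun ω _ => by rcases hS01 ω with h | h <;> simp [h]),
      setIntegral_ite_one P hSm 1, hDset z 1]
  have hcell1m : ∀ z : ℝ, ∫ ω in {ω | Z ω = z ∧ X ω = x}, (1 - S ω) ∂P
      = (P {ω | Z ω = z ∧ S ω = 0 ∧ X ω = x}).toReal := by
    intro z
    rw [show (∫ ω in {ω | Z ω = z ∧ X ω = x}, (1 - S ω) ∂P)
        = ∫ ω in {ω | Z ω = z ∧ X ω = x}, (if S ω = 0 then (1:ℝ) else 0) ∂P from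
      setIntegral_congr_fun (hCmeas z) (fun ω _ => by rcases hS01 ω with h | h <;> simp [h]),
      setIntegral_ite_one P hSm 0, hDset z 0]
  have hm1YS : condMeanOn P {ω | Z ω = 1 ∧ X ω = x} (fun ω' => Y ω' * S ω') = muZS P X Z S Y 1 1 x * pZs P X Z S 1 x := by
    show (∫ ω in {ω | Z ω = 1 ∧ X ω = x}, Y ω * S ω ∂P)
        / (P {ω | Z ω = 1 ∧ X ω = x}).toReal = muZS P X Z S Y 1 1 x * pZs P X Z S 1 x
    unfold muZS pZs condMeanOn condProbOn
    rw [hcellYS 1, hDset 1 1]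
    have hne := hPCne 1 (Or.inr rfl)
    have hne2 := hPDne 1 1 (Or.inr rfl) (Or.inr rfl)
    field_simp
  have hm0YS : condMeanOn P {ω | Z ω = 0 ∧ X ω = x} (fun ω' => Y ω' * S ω') = muZS P X Z S Y 0 1 x * pZs P X Z S 0 x := by
    show (∫ ω in {ω | Z ω = 0 ∧ X ω = x}, Y ω * S ω ∂P)
        / (P {ω | Z ω = 0 ∧ X ω = x}).toReal = muZS P X Z S Y 0 1 x * pZs P X Z S 0 x
    unfold muZS pZs condMeanOn condProbOn
    rw [hcellYS 0, hDset 0 1]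
    have hne := hPCne 0 (Or.inl rfl)
    have hne2 := hPDne 0 1 (Or.inl rfl) (Or.inr rfl)
    field_simp
  have hm1S : condMeanOn P {ω | Z ω = 1 ∧ X ω = x} S = pZs P X Z S 1 x := by
    show (∫ ω in {ω | Z ω = 1 ∧ X ω = x}, S ω ∂P)
        / (P {ω | Z ω = 1 ∧ X ω = x}).toReal = pZs P X Z S 1 x
    unfold pZs condProbOn
    rw [hcellS 1, hDset 1 1]
  have hm0S : condMeanOn P {ω | Z ω = 0 ∧ X ω = x} S = pZs P X Z S 0 x := by
    show (∫ ω in {ω | Z ω = 0 ∧ X ω = x}, S ω ∂P)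
        / (P {ω | Z ω = 0 ∧ X ω = x}).toReal = pZs P X Z S 0 x
    unfold pZs condProbOn
    rw [hcellS 0, hDset 0 1]
  have hm1m1S : condMeanOn P {ω | Z ω = 1 ∧ X ω = x} (fun ω' => 1 - S ω') = 1 - pZs P X Z S 1 x := by
    show (∫ ω in {ω | Z ω = 1 ∧ X ω = x}, (1 - S ω) ∂P)
        / (P {ω | Z ω = 1 ∧ X ω = x}).toReal = 1 - pZs P X Z S 1 x
    unfold pZs condProbOn
    rw [hcell1m 1, hDset 1 1]
    have hne := hPCne 1 (Or.inr rfl)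
    rw [hsplit 1] at hne ⊢
    field_simp
    ring
  have hm0m1S : condMeanOn P {ω | Z ω = 0 ∧ X ω = x} (fun ω' => 1 - S ω') = 1 - pZs P X Z S 0 x := by
    show (∫ ω in {ω | Z ω = 0 ∧ X ω = x}, (1 - S ω) ∂P)
        / (P {ω | Z ω = 0 ∧ X ω = x}).toReal = 1 - pZs P X Z S 0 x
    unfold pZs condProbOn
    rw [hcell1m 0, hDset 0 1]
    have hne := hPCne 0 (Or.inl rfl)
    rw [hsplit 0] at hne ⊢
    field_simp
    ring
  have hm1Ym : condMeanOn P {ω | Z ω = 1 ∧ X ω = x} (fun ω' => Y ω' * (1 - S ω')) = muZS P X Z S Y 1 0 x * (1 - pZs P X Z S 1 x) := by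
    show (∫ ω in {ω | Z ω = 1 ∧ X ω = x}, Y ω * (1 - S ω) ∂P)
        / (P {ω | Z ω = 1 ∧ X ω = x}).toReal = muZS P X Z S Y 1 0 x * (1 - pZs P X Z S 1 x)
    unfold muZS pZs condMeanOn condProbOn
    rw [hcellYm 1, hDset 1 1]
    have hne := hPCne 1 (Or.inr rfl)
    have hne2 := hPDne 1 0 (Or.inr rfl) (Or.inl rfl)
    rw [hsplit 1] at hne ⊢
    field_simp
    ring
  have hm0Ym : condMeanOn P {ω | Z ω = 0 ∧ X ω = x} (fun ω' => Y ω' * (1 - S ω')) = muZS P X Z S Y 0 0 x * (1 - pZs P X Z S 0 x) := by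
    show (∫ ω in {ω | Z ω = 0 ∧ X ω = x}, Y ω * (1 - S ω) ∂P)
        / (P {ω | Z ω = 0 ∧ X ω = x}).toReal = muZS P X Z S Y 0 0 x * (1 - pZs P X Z S 0 x)
    unfold muZS pZs condMeanOn condProbOn
    rw [hcellYm 0, hDset 0 1]
    have hne := hPCne 0 (Or.inl rfl)
    have hne2 := hPDne 0 0 (Or.inl rfl) (Or.inl rfl)
    rw [hsplit 0] at hne ⊢
    field_simp
    ring
  -- integrability of the basic integrands
  have hbS : ∀ ω, ‖S ω‖ ≤ (1:ℝ) := fun ω => by rcases hS01 ω with h | h <;> simp [h]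
  have hb1mS : ∀ ω, ‖1 - S ω‖ ≤ (1:ℝ) := fun ω => by rcases hS01 ω with h | h <;> simp [h]
  have hYB : Integrable Y (P.restrict {ω | X ω = x}) := hYi.restrict
  have hSB : Integrable S (P.restrict {ω | X ω = x}) := by
    have h := (integrable_const (1:ℝ) : Integrable _ (P.restrict {ω | X ω = x})).bdd_mul
      hSm.aestronglyMeasurable (ae_of_all _ hbS)
    simpa using h
  have hYSB : Integrable (fun ω' => Y ω' * S ω') (P.restrict {ω | X ω = x}) := by
    have h := hYB.bdd_mul hSm.aestronglyMeasurable (ae_of_all _ hbS)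
    exact h.congr (ae_of_all _ (fun ω => mul_comm (S ω) (Y ω)))
  have h1mSB : Integrable (fun ω' => 1 - S ω') (P.restrict {ω | X ω = x}) := (integrable_const 1).sub hSB
  have hY1mSB : Integrable (fun ω' => Y ω' * (1 - S ω')) (P.restrict {ω | X ω = x}) := by
    have h := hYB.bdd_mul (measurable_const.sub hSm).aestronglyMeasurable (ae_of_all _ hb1mS)
    exact h.congr (ae_of_all _ (fun ω => mul_comm ((1:ℝ) - S ω) (Y ω)))
  have hψi : ∀ (a : ℝ) (f : Ω → ℝ), Integrable f (P.restrict {ω | X ω = x}) →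
      Integrable (psiX P X Z x a f) (P.restrict {ω | X ω = x}) :=
    fun a f hf => psiX_integrable P X x a hZm hf
  have hψv : ∀ (a : ℝ), a = 0 ∨ a = 1 → ∀ (f : Ω → ℝ), Integrable f (P.restrict {ω | X ω = x}) →
      ∫ ω in {ω | X ω = x}, psiX P X Z x a f ω ∂P
        = condMeanOn P {ω | Z ω = a ∧ X ω = x} f * (P {ω | X ω = x}).toReal :=
    fun a ha f hf => psiX_setIntegral P X x a hZm hBmeas hf (hZx a ha)
  have hp0ne : pZs P X Z S 0 x ≠ 0 := ne_of_gt hp0x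
  have hp1ne : pZs P X Z S 1 x ≠ 0 := ne_of_gt (lt_trans hp0x hp01x)
  have h1mp1ne : 1 - pZs P X Z S 1 x ≠ 0 := sub_ne_zero.2 hp1x.ne'
  have h1mp0ne : 1 - pZs P X Z S 0 x ≠ 0 := sub_ne_zero.2 (lt_trans hp01x hp1x).ne'
  have hk10ne : pZs P X Z S 1 x - pZs P X Z S 0 x ≠ 0 := sub_ne_zero.2 hp01x.ne'
  refine ⟨?_, ?_, ?_⟩
  · -- u = 00
    rw [hTau00]
    have hEq : Set.EqOn
        (fun ω => tck00 (X ω)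
          + (phiA1_00 P X Z S Y ω - phiA0_00 P X Z S Y ω - tck00 (X ω) * gA00 P X Z S ω)
            / (1 - pZs P X Z S 1 (X ω)))
        (fun ω => tck00 x
          + (psiX P X Z x 1 (fun ω' => Y ω' * (1 - S ω')) ω
              - ((1 - pZs P X Z S 1 x) / (1 - pZs P X Z S 0 x) * psiX P X Z x 0 (fun ω' => Y ω' * (1 - S ω')) ω
                + muZS P X Z S Y 0 0 x * (psiX P X Z x 1 (fun ω' => 1 - S ω') ω - (1 - pZs P X Z S 1 x) / (1 - pZs P X Z S 0 x) * psiX P X Z x 0 (fun ω' => 1 - S ω') ω))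
              - tck00 x * psiX P X Z x 1 (fun ω' => 1 - S ω') ω) / (1 - pZs P X Z S 1 x))
        {ω | X ω = x} := by
      intro ω hω
      have hxx : X ω = x := hω
      simp only [phiA1_00, phiA0_00, gA00, psiA, psiX, hxx]
    unfold condMeanOn
    rw [setIntegral_congr_fun hBmeas hEq]
    have i1 := hψi 1 (fun ω' => Y ω' * (1 - S ω')) hY1mSB
    have i2 : Integrable (fun ω => (1 - pZs P X Z S 1 x) / (1 - pZs P X Z S 0 x) * psiX P X Z x 0 (fun ω' => Y ω' * (1 - S ω')) ω) (P.restrict {ω | X ω = x}) :=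
      (hψi 0 (fun ω' => Y ω' * (1 - S ω')) hY1mSB).const_mul _
    have i22 : Integrable (fun ω => (1 - pZs P X Z S 1 x) / (1 - pZs P X Z S 0 x) * psiX P X Z x 0 (fun ω' => 1 - S ω') ω) (P.restrict {ω | X ω = x}) :=
      (hψi 0 (fun ω' => 1 - S ω') h1mSB).const_mul _
    have i23 : Integrable (fun ω => psiX P X Z x 1 (fun ω' => 1 - S ω') ω - (1 - pZs P X Z S 1 x) / (1 - pZs P X Z S 0 x) * psiX P X Z x 0 (fun ω' => 1 - S ω') ω) (P.restrict {ω | X ω = x}) :=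
      (hψi 1 (fun ω' => 1 - S ω') h1mSB).sub i22
    have i3 : Integrable (fun ω => muZS P X Z S Y 0 0 x * (psiX P X Z x 1 (fun ω' => 1 - S ω') ω - (1 - pZs P X Z S 1 x) / (1 - pZs P X Z S 0 x) * psiX P X Z x 0 (fun ω' => 1 - S ω') ω)) (P.restrict {ω | X ω = x}) :=
      i23.const_mul _
    have i4 : Integrable (fun ω => tck00 x * psiX P X Z x 1 (fun ω' => 1 - S ω') ω) (P.restrict {ω | X ω = x}) :=
      (hψi 1 (fun ω' => 1 - S ω') h1mSB).const_mul _
    have i5 : Integrable (fun ω => (1 - pZs P X Z S 1 x) / (1 - pZs P X Z S 0 x) * psiX P X Z x 0 (fun ω' => Y ω' * (1 - S ω')) ω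
        + muZS P X Z S Y 0 0 x * (psiX P X Z x 1 (fun ω' => 1 - S ω') ω - (1 - pZs P X Z S 1 x) / (1 - pZs P X Z S 0 x) * psiX P X Z x 0 (fun ω' => 1 - S ω') ω)) (P.restrict {ω | X ω = x}) := i2.add i3
    have i6 : Integrable (fun ω => psiX P X Z x 1 (fun ω' => Y ω' * (1 - S ω')) ω
        - ((1 - pZs P X Z S 1 x) / (1 - pZs P X Z S 0 x) * psiX P X Z x 0 (fun ω' => Y ω' * (1 - S ω')) ω
          + muZS P X Z S Y 0 0 x * (psiX P X Z x 1 (fun ω' => 1 - S ω') ω - (1 - pZs P X Z S 1 x) / (1 - pZs P X Z S 0 x) * psiX P X Z x 0 (fun ω' => 1 - S ω') ω))) (P.restrict {ω | X ω = x}) := i1.sub i5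
    have i7 : Integrable (fun ω => psiX P X Z x 1 (fun ω' => Y ω' * (1 - S ω')) ω
        - ((1 - pZs P X Z S 1 x) / (1 - pZs P X Z S 0 x) * psiX P X Z x 0 (fun ω' => Y ω' * (1 - S ω')) ω
          + muZS P X Z S Y 0 0 x * (psiX P X Z x 1 (fun ω' => 1 - S ω') ω - (1 - pZs P X Z S 1 x) / (1 - pZs P X Z S 0 x) * psiX P X Z x 0 (fun ω' => 1 - S ω') ω))
        - tck00 x * psiX P X Z x 1 (fun ω' => 1 - S ω') ω) (P.restrict {ω | X ω = x}) := i6.sub i4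
    rw [integral_add (integrable_const (tck00 x)) (i7.div_const (1 - pZs P X Z S 1 x)),
      setIntegral_const, integral_div, integral_sub i6 i4, integral_sub i1 i5, integral_add i2 i3]
    simp only [integral_const_mul]
    rw [integral_sub (hψi 1 (fun ω' => 1 - S ω') h1mSB) i22]
    simp only [integral_const_mul]
    rw [hψv 1 (Or.inr rfl) (fun ω' => Y ω' * (1 - S ω')) hY1mSB, hψv 0 (Or.inl rfl) (fun ω' => Y ω' * (1 - S ω')) hY1mSB,
      hψv 1 (Or.inr rfl) (fun ω' => 1 - S ω') h1mSB, hψv 0 (Or.inl rfl) (fun ω' => 1 - S ω') h1mSB,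
      hm1Ym, hm0Ym, hm1m1S, hm0m1S]
    simp only [smul_eq_mul, Measure.real]
    field_simp
    ring
  · -- u = 10
    rw [hTau10]
    have hEq : Set.EqOn
        (fun ω => tck10 (X ω)
          + (phiA1_10 P X Z S Y ω - phiA0_10 P X Z S Y ω - tck10 (X ω) * gA10 P X Z S ω)
            / (pZs P X Z S 1 (X ω) - pZs P X Z S 0 (X ω)))
        (fun ω => tck10 x
          + (((pZs P X Z S 1 x - pZs P X Z S 0 x) / pZs P X Z S 1 x * psiX P X Z x 1 (fun ω' => Y ω' * S ω') ω
              - muZS P X Z S Y 1 1 x * (psiX P X Z x 0 S ω - pZs P X Z S 0 x / pZs P X Z S 1 x * psiX P X Z x 1 S ω))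
            - ((pZs P X Z S 1 x - pZs P X Z S 0 x) / (1 - pZs P X Z S 0 x) * psiX P X Z x 0 (fun ω' => Y ω' * (1 - S ω')) ω
              - muZS P X Z S Y 0 0 x * (psiX P X Z x 1 (fun ω' => 1 - S ω') ω - (1 - pZs P X Z S 1 x) / (1 - pZs P X Z S 0 x) * psiX P X Z x 0 (fun ω' => 1 - S ω') ω))
            - tck10 x * (psiX P X Z x 1 S ω - psiX P X Z x 0 S ω)) / (pZs P X Z S 1 x - pZs P X Z S 0 x))
        {ω | X ω = x} := by
      intro ω hω
      have hxx : X ω = x := hω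
      simp only [phiA1_10, phiA0_10, gA10, psiA, psiX, hxx]
    unfold condMeanOn
    rw [setIntegral_congr_fun hBmeas hEq]
    have j1 : Integrable (fun ω => (pZs P X Z S 1 x - pZs P X Z S 0 x) / pZs P X Z S 1 x * psiX P X Z x 1 (fun ω' => Y ω' * S ω') ω) (P.restrict {ω | X ω = x}) :=
      (hψi 1 (fun ω' => Y ω' * S ω') hYSB).const_mul _
    have j2 : Integrable (fun ω => pZs P X Z S 0 x / pZs P X Z S 1 x * psiX P X Z x 1 S ω) (P.restrict {ω | X ω = x}) :=
      (hψi 1 S hSB).const_mul _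
    have j3 : Integrable (fun ω => psiX P X Z x 0 S ω - pZs P X Z S 0 x / pZs P X Z S 1 x * psiX P X Z x 1 S ω) (P.restrict {ω | X ω = x}) :=
      (hψi 0 S hSB).sub j2
    have j4 : Integrable (fun ω => muZS P X Z S Y 1 1 x * (psiX P X Z x 0 S ω - pZs P X Z S 0 x / pZs P X Z S 1 x * psiX P X Z x 1 S ω)) (P.restrict {ω | X ω = x}) :=
      j3.const_mul _
    have jA : Integrable (fun ω => (pZs P X Z S 1 x - pZs P X Z S 0 x) / pZs P X Z S 1 x * psiX P X Z x 1 (fun ω' => Y ω' * S ω') ω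
        - muZS P X Z S Y 1 1 x * (psiX P X Z x 0 S ω - pZs P X Z S 0 x / pZs P X Z S 1 x * psiX P X Z x 1 S ω)) (P.restrict {ω | X ω = x}) := j1.sub j4
    have j5 : Integrable (fun ω => (pZs P X Z S 1 x - pZs P X Z S 0 x) / (1 - pZs P X Z S 0 x) * psiX P X Z x 0 (fun ω' => Y ω' * (1 - S ω')) ω) (P.restrict {ω | X ω = x}) :=
      (hψi 0 (fun ω' => Y ω' * (1 - S ω')) hY1mSB).const_mul _
    have j6 : Integrable (fun ω => (1 - pZs P X Z S 1 x) / (1 - pZs P X Z S 0 x) * psiX P X Z x 0 (fun ω' => 1 - S ω') ω) (P.restrict {ω | X ω = x}) :=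
      (hψi 0 (fun ω' => 1 - S ω') h1mSB).const_mul _
    have j7 : Integrable (fun ω => psiX P X Z x 1 (fun ω' => 1 - S ω') ω - (1 - pZs P X Z S 1 x) / (1 - pZs P X Z S 0 x) * psiX P X Z x 0 (fun ω' => 1 - S ω') ω) (P.restrict {ω | X ω = x}) :=
      (hψi 1 (fun ω' => 1 - S ω') h1mSB).sub j6
    have j8 : Integrable (fun ω => muZS P X Z S Y 0 0 x * (psiX P X Z x 1 (fun ω' => 1 - S ω') ω - (1 - pZs P X Z S 1 x) / (1 - pZs P X Z S 0 x) * psiX P X Z x 0 (fun ω' => 1 - S ω') ω)) (P.restrict {ω | X ω = x}) :=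
      j7.const_mul _
    have jB : Integrable (fun ω => (pZs P X Z S 1 x - pZs P X Z S 0 x) / (1 - pZs P X Z S 0 x) * psiX P X Z x 0 (fun ω' => Y ω' * (1 - S ω')) ω
        - muZS P X Z S Y 0 0 x * (psiX P X Z x 1 (fun ω' => 1 - S ω') ω - (1 - pZs P X Z S 1 x) / (1 - pZs P X Z S 0 x) * psiX P X Z x 0 (fun ω' => 1 - S ω') ω)) (P.restrict {ω | X ω = x}) := j5.sub j8
    have j9 : Integrable (fun ω => psiX P X Z x 1 S ω - psiX P X Z x 0 S ω) (P.restrict {ω | X ω = x}) :=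
      (hψi 1 S hSB).sub (hψi 0 S hSB)
    have jC : Integrable (fun ω => tck10 x * (psiX P X Z x 1 S ω - psiX P X Z x 0 S ω)) (P.restrict {ω | X ω = x}) :=
      j9.const_mul _
    have jAB : Integrable (fun ω => ((pZs P X Z S 1 x - pZs P X Z S 0 x) / pZs P X Z S 1 x * psiX P X Z x 1 (fun ω' => Y ω' * S ω') ω
        - muZS P X Z S Y 1 1 x * (psiX P X Z x 0 S ω - pZs P X Z S 0 x / pZs P X Z S 1 x * psiX P X Z x 1 S ω))
        - ((pZs P X Z S 1 x - pZs P X Z S 0 x) / (1 - pZs P X Z S 0 x) * psiX P X Z x 0 (fun ω' => Y ω' * (1 - S ω')) ω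
          - muZS P X Z S Y 0 0 x * (psiX P X Z x 1 (fun ω' => 1 - S ω') ω - (1 - pZs P X Z S 1 x) / (1 - pZs P X Z S 0 x) * psiX P X Z x 0 (fun ω' => 1 - S ω') ω))) (P.restrict {ω | X ω = x}) := jA.sub jB
    have jAll : Integrable (fun ω => ((pZs P X Z S 1 x - pZs P X Z S 0 x) / pZs P X Z S 1 x * psiX P X Z x 1 (fun ω' => Y ω' * S ω') ω
        - muZS P X Z S Y 1 1 x * (psiX P X Z x 0 S ω - pZs P X Z S 0 x / pZs P X Z S 1 x * psiX P X Z x 1 S ω))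
        - ((pZs P X Z S 1 x - pZs P X Z S 0 x) / (1 - pZs P X Z S 0 x) * psiX P X Z x 0 (fun ω' => Y ω' * (1 - S ω')) ω
          - muZS P X Z S Y 0 0 x * (psiX P X Z x 1 (fun ω' => 1 - S ω') ω - (1 - pZs P X Z S 1 x) / (1 - pZs P X Z S 0 x) * psiX P X Z x 0 (fun ω' => 1 - S ω') ω))
        - tck10 x * (psiX P X Z x 1 S ω - psiX P X Z x 0 S ω)) (P.restrict {ω | X ω = x}) := jAB.sub jC
    rw [integral_add (integrable_const (tck10 x)) (jAll.div_const (pZs P X Z S 1 x - pZs P X Z S 0 x)),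
      setIntegral_const, integral_div, integral_sub jAB jC, integral_sub jA jB,
      integral_sub j1 j4, integral_sub j5 j8]
    simp only [integral_const_mul]
    rw [integral_sub (hψi 0 S hSB) j2,
      integral_sub (hψi 1 (fun ω' => 1 - S ω') h1mSB) j6,
      integral_sub (hψi 1 S hSB) (hψi 0 S hSB)]
    simp only [integral_const_mul]
    rw [hψv 1 (Or.inr rfl) (fun ω' => Y ω' * S ω') hYSB, hψv 0 (Or.inl rfl) S hSB, hψv 1 (Or.inr rfl) S hSB,
      hψv 0 (Or.inl rfl) (fun ω' => Y ω' * (1 - S ω')) hY1mSB, hψv 1 (Or.inr rfl) (fun ω' => 1 - S ω') h1mSB,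
      hψv 0 (Or.inl rfl) (fun ω' => 1 - S ω') h1mSB,
      hm1YS, hm0S, hm1S, hm0Ym, hm1m1S, hm0m1S]
    simp only [smul_eq_mul, Measure.real]
    field_simp
    ring
  · -- u = 11
    rw [hTau11]
    have hEq : Set.EqOn
        (fun ω => tck11 (X ω)
          + (phiA1_11 P X Z S Y ω - phiA0_11 P X Z S Y ω - tck11 (X ω) * gA11 P X Z S ω)
            / pZs P X Z S 0 (X ω))
        (fun ω => tck11 x
          + ((pZs P X Z S 0 x / pZs P X Z S 1 x * psiX P X Z x 1 (fun ω' => Y ω' * S ω') ω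
              + muZS P X Z S Y 1 1 x * (psiX P X Z x 0 S ω - pZs P X Z S 0 x / pZs P X Z S 1 x * psiX P X Z x 1 S ω))
            - psiX P X Z x 0 (fun ω' => Y ω' * S ω') ω - tck11 x * psiX P X Z x 0 S ω) / pZs P X Z S 0 x)
        {ω | X ω = x} := by
      intro ω hω
      have hxx : X ω = x := hω
      simp only [phiA1_11, phiA0_11, gA11, psiA, psiX, hxx]
    unfold condMeanOn
    rw [setIntegral_congr_fun hBmeas hEq]
    have k1 : Integrable (fun ω => pZs P X Z S 0 x / pZs P X Z S 1 x * psiX P X Z x 1 (fun ω' => Y ω' * S ω') ω) (P.restrict {ω | X ω = x}) :=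
      (hψi 1 (fun ω' => Y ω' * S ω') hYSB).const_mul _
    have k2 : Integrable (fun ω => pZs P X Z S 0 x / pZs P X Z S 1 x * psiX P X Z x 1 S ω) (P.restrict {ω | X ω = x}) :=
      (hψi 1 S hSB).const_mul _
    have k3 : Integrable (fun ω => psiX P X Z x 0 S ω - pZs P X Z S 0 x / pZs P X Z S 1 x * psiX P X Z x 1 S ω) (P.restrict {ω | X ω = x}) :=
      (hψi 0 S hSB).sub k2
    have k4 : Integrable (fun ω => muZS P X Z S Y 1 1 x * (psiX P X Z x 0 S ω - pZs P X Z S 0 x / pZs P X Z S 1 x * psiX P X Z x 1 S ω)) (P.restrict {ω | X ω = x}) :=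
      k3.const_mul _
    have kA : Integrable (fun ω => pZs P X Z S 0 x / pZs P X Z S 1 x * psiX P X Z x 1 (fun ω' => Y ω' * S ω') ω
        + muZS P X Z S Y 1 1 x * (psiX P X Z x 0 S ω - pZs P X Z S 0 x / pZs P X Z S 1 x * psiX P X Z x 1 S ω)) (P.restrict {ω | X ω = x}) := k1.add k4
    have k5 : Integrable (fun ω => tck11 x * psiX P X Z x 0 S ω) (P.restrict {ω | X ω = x}) :=
      (hψi 0 S hSB).const_mul _
    have kB : Integrable (fun ω => pZs P X Z S 0 x / pZs P X Z S 1 x * psiX P X Z x 1 (fun ω' => Y ω' * S ω') ω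
        + muZS P X Z S Y 1 1 x * (psiX P X Z x 0 S ω - pZs P X Z S 0 x / pZs P X Z S 1 x * psiX P X Z x 1 S ω)
        - psiX P X Z x 0 (fun ω' => Y ω' * S ω') ω) (P.restrict {ω | X ω = x}) := kA.sub (hψi 0 (fun ω' => Y ω' * S ω') hYSB)
    have kAll : Integrable (fun ω => pZs P X Z S 0 x / pZs P X Z S 1 x * psiX P X Z x 1 (fun ω' => Y ω' * S ω') ω
        + muZS P X Z S Y 1 1 x * (psiX P X Z x 0 S ω - pZs P X Z S 0 x / pZs P X Z S 1 x * psiX P X Z x 1 S ω)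
        - psiX P X Z x 0 (fun ω' => Y ω' * S ω') ω - tck11 x * psiX P X Z x 0 S ω) (P.restrict {ω | X ω = x}) := kB.sub k5
    rw [integral_add (integrable_const (tck11 x)) (kAll.div_const (pZs P X Z S 0 x)),
      setIntegral_const, integral_div, integral_sub kB k5,
      integral_sub kA (hψi 0 (fun ω' => Y ω' * S ω') hYSB), integral_add k1 k4]
    simp only [integral_const_mul]
    rw [integral_sub (hψi 0 S hSB) k2]
    simp only [integral_const_mul]
    rw [hψv 1 (Or.inr rfl) (fun ω' => Y ω' * S ω') hYSB, hψv 0 (Or.inl rfl) (fun ω' => Y ω' * S ω') hYSB,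
      hψv 0 (Or.inl rfl) S hSB, hψv 1 (Or.inr rfl) S hSB,
      hm1YS, hm0YS, hm1S, hm0S]
    simp only [smul_eq_mul, Measure.real]
    field_simp
    ring
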